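/- Let G be a graph, let u, v be true twins in G with u ≠ v, and let G' be the induced subgraph of G on V(G) \ {v}. Then for all vertices x, y in G', the distance between x and y in G' equals the distance between x and y in G. -/

import Mathlib

open SimpleGraph

private lemma twin_adj {V : Type*} {G : SimpleGraph V} {u v : V}
    (htwin : insert u (G.neighborSet u) = insert v (G.neighborSet v))
    {w : V} (h : G.Adj w v) : w = u ∨ G.Adj u w := by
  have : w ∈ insert v (G.neighborSet v) := Set.mem_insert_of_mem _ h.symm
  rw [← htwin] at this
  rcases this with h | h
  · exact Or.inl h
  · exact Or.inr h

/-- From any walk between vertices ≠ v, get one avoiding v of no greater length. -/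
private lemma avoid_v {V : Type*} {G : SimpleGraph V} {u v : V} (huv : u ≠ v)
    (htwin : insert u (G.neighborSet u) = insert v (G.neighborSet v)) :
    ∀ n {x y : V} (p : G.Walk x y), p.length ≤ n → x ≠ v → y ≠ v →
      ∃ q : G.Walk x y, q.length ≤ p.length ∧ v ∉ q.support := by
  intro n
  induction n with
  | zero =>
    intro x y p hp hx hy
    cases p with
    | nil => exact ⟨SimpleGraph.Walk.nil, le_rfl, by simp [Ne.symm hx]⟩
    | cons h p' => simp at hp
  | succ n ih =>
    intro x y p hp hx hy
    cases p with
    | nil => exact ⟨SimpleGraph.Walk.nil, le_rfl, by simp [Ne.symm hx]⟩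
    | @cons _ b _ h p' =>
      by_cases hbv : b = v
      · have hbv' : v = b := hbv.symm
        subst hbv'
        cases p' with
        | nil => exact absurd rfl hy
        | @cons v1 c y1 h' p'' =>
          have hcv : c ≠ v := h'.ne.symm
          have hlen : p''.length ≤ n := by
            simp only [SimpleGraph.Walk.length_cons] at hp; omega
          obtain ⟨q, hq, hqs⟩ := ih p'' hlen hcv hy
          by_cases hxc : x = c
          · subst hxc
            exact ⟨q, by simp only [SimpleGraph.Walk.length_cons]; omega, hqs⟩
          · rcases twin_adj htwin h with hxu | hxu
            · subst hxu
              rcases twin_adj htwin h'.symm with hcu | hcu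
              · exact absurd hcu.symm hxc
              · exact ⟨SimpleGraph.Walk.cons hcu q,
                  by simp only [SimpleGraph.Walk.length_cons]; omega,
                  by simp [hqs, Ne.symm huv]⟩
            · rcases twin_adj htwin h'.symm with hcu | hcu
              · subst hcu
                exact ⟨SimpleGraph.Walk.cons hxu.symm q,
                  by simp only [SimpleGraph.Walk.length_cons]; omega,
                  by simp [hqs, Ne.symm hx]⟩
              · by_cases hxu' : x = u
                · subst hxu'
                  exact ⟨SimpleGraph.Walk.cons hcu q,
                    by simp only [SimpleGraph.Walk.length_cons]; omega,
                    by simp [hqs, Ne.symm huv]⟩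
                · exact ⟨SimpleGraph.Walk.cons hxu.symm (SimpleGraph.Walk.cons hcu q),
                    by simp only [SimpleGraph.Walk.length_cons]; omega,
                    by simp [hqs, Ne.symm hx, Ne.symm huv]⟩
      · have hlen : p'.length ≤ n := by
          simp only [SimpleGraph.Walk.length_cons] at hp; omega
        obtain ⟨q, hq, hqs⟩ := ih p' hlen hbv hy
        exact ⟨SimpleGraph.Walk.cons h q,
          by simp only [SimpleGraph.Walk.length_cons]; omega,
          by simp [hqs, Ne.symm hx]⟩

/-- A walk in G avoiding v lifts to the induced graph on {v}ᶜ with the same length. -/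
private lemma lift_walk {V : Type*} {G : SimpleGraph V} {v : V} :
    ∀ {x y : V} (p : G.Walk x y) (_ : v ∉ p.support) (hx : x ≠ v) (hy : y ≠ v),
      ∃ q : (G.induce ({v}ᶜ : Set V)).Walk ⟨x, hx⟩ ⟨y, hy⟩, q.length = p.length := by
  intro x y p
  induction p with
  | nil => intro _ hx hy; exact ⟨SimpleGraph.Walk.nil, rfl⟩
  | @cons a b c h p ih =>
    intro hs hx hy
    have hbv : b ≠ v := by
      intro hbv
      exact hs (by rw [SimpleGraph.Walk.support_cons]
                   exact List.mem_cons_of_mem _ (hbv ▸ p.start_mem_support))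
    obtain ⟨q, hq⟩ := ih (fun hv => hs (by simp [hv])) hbv hy
    exact ⟨SimpleGraph.Walk.cons (by exact h : (G.induce ({v}ᶜ : Set V)).Adj ⟨a, hx⟩ ⟨b, hbv⟩) q,
      congrArg (· + 1) hq⟩

/-- If `u ≠ v` are true twins in `G` and `G'` is the induced subgraph of `G` on
`V(G) \ {v}`, then distances in `G'` agree with distances in `G`. -/
theorem dist_induce_eq_of_true_twins {V : Type*} (G : SimpleGraph V) (u v : V)
    (huv : u ≠ v)
    (htwin : insert u (G.neighborSet u) = insert v (G.neighborSet v)) :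
    ∀ x y : ({v}ᶜ : Set V), (G.induce ({v}ᶜ : Set V)).dist x y = G.dist x y := by
  intro x y
  by_cases hr : G.Reachable x y
  · obtain ⟨p, hp⟩ := hr.exists_walk_length_eq_dist
    have hx : (x : V) ≠ v := x.2
    have hy : (y : V) ≠ v := y.2
    obtain ⟨q, hq, hqs⟩ := avoid_v huv htwin p.length p le_rfl hx hy
    obtain ⟨q', hq'⟩ := lift_walk q hqs hx hy
    apply le_antisymm
    · calc (G.induce ({v}ᶜ : Set V)).dist x y ≤ q'.length := by
            have := SimpleGraph.dist_le q'
            convert this using 2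
          _ ≤ p.length := by omega
          _ = G.dist x y := hp
    · have hr' : (G.induce ({v}ᶜ : Set V)).Reachable x y := by
        constructor
        convert q' using 2
      obtain ⟨w, hw⟩ := hr'.exists_walk_length_eq_dist
      have : G.dist x y ≤ (w.map (SimpleGraph.Embedding.induce _).toHom).length :=
        SimpleGraph.dist_le _
      rwa [SimpleGraph.Walk.length_map, hw] at this
  · have hr' : ¬ (G.induce ({v}ᶜ : Set V)).Reachable x y := by
      intro ⟨w⟩
      exact hr ⟨w.map (SimpleGraph.Embedding.induce _).toHom⟩
    rw [SimpleGraph.dist_eq_zero_of_not_reachable hr,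
        SimpleGraph.dist_eq_zero_of_not_reachable hr']
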